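/- Let X be a nonempty subset of the real line ℝ that is unbounded above and unbounded below, and suppose d_H(X, ℝ) = ∞. Then the ultrametric pseudodiameter of X (in the induced metric) is infinite: diam_u X = ∞. -/

import Mathlib

open scoped ENNReal

noncomputable section

/-- Ultrametric pseudodistance: infimum over chains from `x` to `y` of the
maximal edge length of the chain. -/
noncomputable def ultraDist {X : Type*} [MetricSpace X] (x y : X) : ℝ≥0∞ :=
  ⨅ (n : ℕ) (f : Fin (n + 1) → X) (_ : f 0 = x) (_ : f (Fin.last n) = y),
    ⨆ i : Fin n, edist (f i.castSucc) (f i.succ)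

/-- Ultrametric pseudodiameter. -/
noncomputable def ultraDiam (X : Type*) [MetricSpace X] : ℝ≥0∞ :=
  ⨆ (x : X) (y : X), ultraDist x y

/-- A correspondence between `X` and `Y`: a relation whose projections are surjective. -/
def IsCorrespondence {X Y : Type*} (R : Set (X × Y)) : Prop :=
  (∀ x : X, ∃ y : Y, (x, y) ∈ R) ∧ (∀ y : Y, ∃ x : X, (x, y) ∈ R)

/-- Distortion of a relation. -/
noncomputable def distortion {X Y : Type*} [MetricSpace X] [MetricSpace Y]
    (R : Set (X × Y)) : ℝ≥0∞ :=
  ⨆ (p ∈ R) (q ∈ R), ENNReal.ofReal |dist p.1 q.1 - dist p.2 q.2|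

/-- Gromov–Hausdorff distance: half the infimal distortion of correspondences. -/
noncomputable def ghDist (X Y : Type*) [MetricSpace X] [MetricSpace Y] : ℝ≥0∞ :=
  (⨅ (R : Set (X × Y)) (_ : IsCorrespondence R), distortion R) / 2



/-- Crossing lemma: a predicate true at `0` and false at `Fin.last n` must flip
along some edge. -/
lemma exists_cross {n : ℕ} (p : Fin (n + 1) → Prop) (h0 : p 0) (hn : ¬ p (Fin.last n)) :
    ∃ i : Fin n, p i.castSucc ∧ ¬ p i.succ := by
  classical
  have hex : ∃ k : ℕ, ∃ h : k < n + 1, ¬ p ⟨k, h⟩ := ⟨n, n.lt_succ_self, hn⟩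
  set k := Nat.find hex with hkdef
  obtain ⟨hk, hpk⟩ := Nat.find_spec hex
  have hk0 : k ≠ 0 := by
    intro h
    apply hpk
    have he : (⟨k, hk⟩ : Fin (n + 1)) = 0 := Fin.ext (by simp [h])
    rw [he]; exact h0
  have hi : k - 1 < n := by omega
  refine ⟨⟨k - 1, hi⟩, ?_, ?_⟩
  · have hmin := Nat.find_min hex (show k - 1 < k by omega)
    push_neg at hmin
    exact hmin (by omega)
  · convert hpk using 2
    simp [Fin.succ, Fin.ext_iff]
    convert Nat.sub_add_cancel (Nat.pos_of_ne_zero hk0)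
    exact Nat.lt_succ_iff.symm

/-- a nonempty subset of `ℝ`, unbounded above and below, at
infinite Hausdorff distance from `ℝ`, has infinite ultrametric pseudodiameter. -/
theorem ultraDiam_eq_top_of_hausdorff_top (X : Set ℝ) (hX : X.Nonempty)
    (hup : ¬BddAbove X) (hlow : ¬BddBelow X)
    (hinf : EMetric.hausdorffEdist X (Set.univ : Set ℝ) = ⊤) :
    ultraDiam X = ⊤ := by
  apply ENNReal.eq_top_of_forall_nnreal_le
  intro r
  -- extract a point `t` far from `X`
  have hsup : (⨆ y ∈ (Set.univ : Set ℝ), EMetric.infEdist y X) = ⊤ := by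
    replace hinf : (⨆ x ∈ X, EMetric.infEdist x (Set.univ : Set ℝ)) ⊔ (⨆ y ∈ (Set.univ : Set ℝ), EMetric.infEdist y X) = ⊤ := by
      rw [← hinf, EMetric.hausdorffEdist, EMetric.hausdorffEdist_def]; rfl
    have h1 : (⨆ x ∈ X, EMetric.infEdist x (Set.univ : Set ℝ)) = 0 := by
      refine le_antisymm ?_ zero_le
      refine iSup₂_le fun x _ => le_of_eq ?_
      exact EMetric.infEdist_zero_of_mem (Set.mem_univ x)
    rw [h1] at hinf
    simpa using hinf
  have hlt : (↑r : ℝ≥0∞) < ⨆ y ∈ (Set.univ : Set ℝ), EMetric.infEdist y X := by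
    rw [hsup]; exact ENNReal.coe_lt_top
  rw [lt_iSup_iff] at hlt
  obtain ⟨t, hlt⟩ := hlt
  simp only [Set.mem_univ, iSup_pos] at hlt
  -- every point of `X` is far from `t`
  have hfar : ∀ x ∈ X, x < t - r ∨ t + r < x := by
    intro x hx
    have h1 : (↑r : ℝ≥0∞) < edist t x :=
      lt_of_lt_of_le hlt (EMetric.infEdist_le_edist_of_mem hx)
    rw [edist_dist, ← ENNReal.ofReal_coe_nnreal,
      ENNReal.ofReal_lt_ofReal_iff_of_nonneg r.coe_nonneg] at h1
    rw [Real.dist_eq] at h1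
    rcases le_or_gt x t with h | h
    · left
      have habs : |t - x| = t - x := abs_of_nonneg (by linarith)
      rw [habs] at h1; linarith
    · right
      have habs : |t - x| = x - t := by rw [abs_of_nonpos (by linarith)]; ring
      rw [habs] at h1; linarith
  -- pick endpoints on both sides
  obtain ⟨a, haX, ha⟩ := not_bddBelow_iff.mp hlow (t - r)
  obtain ⟨b, hbX, hb⟩ := not_bddAbove_iff.mp hup (t + r)
  have key : (↑r : ℝ≥0∞) ≤ ultraDist (⟨a, haX⟩ : X) (⟨b, hbX⟩ : X) := by
    refine le_iInf fun n => le_iInf fun f => le_iInf fun h0 => le_iInf fun hl => ?_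
    have h0' : ((f 0 : ℝ)) = a := by rw [h0]
    have hl' : ((f (Fin.last n) : ℝ)) = b := by rw [hl]
    obtain ⟨i, hip, hin⟩ := exists_cross (fun j => ((f j : ℝ) < t - r))
      (by show ((f 0 : ℝ)) < t - ↑r; rw [h0']; exact ha)
      (by show ¬(((f (Fin.last n) : ℝ)) < t - ↑r); rw [hl']
          exact not_lt.mpr (by nlinarith [r.coe_nonneg]))
    have hy : t + r < (f i.succ : ℝ) := by
      rcases hfar (f i.succ : ℝ) (f i.succ).2 with h | h
      · exact absurd h hin
      · exact h
    have hedge : (↑r : ℝ≥0∞) ≤ edist (f i.castSucc) (f i.succ) := by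
      rw [Subtype.edist_eq, edist_dist, ← ENNReal.ofReal_coe_nnreal]
      apply ENNReal.ofReal_le_ofReal
      rw [Real.dist_eq, abs_sub_comm]
      have : (r : ℝ) ≤ (f i.succ : ℝ) - (f i.castSucc : ℝ) := by
        have := r.coe_nonneg; linarith
      exact this.trans (le_abs_self _)
    exact hedge.trans (le_iSup (fun i => edist (f i.castSucc) (f i.succ)) i)
  calc (↑r : ℝ≥0∞) ≤ _ := key
    _ ≤ ultraDiam X := le_iSup₂ (f := fun x y : X => ultraDist x y) _ _


end
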